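/- Let ν be an M×N real matrix of rank M, K = N − M, R an N×M real matrix, and c¹,…,c^K a basis of ker ν assembled into the N×K matrix C; let A = [R | C]. Suppose (𝔪, 𝔫, I_s) satisfy: R(n,m) = 0 for m ∈ 𝔪, n ∉ 𝔫; c^α(n) = 0 for α ∈ I_s, n ∉ 𝔫; and |𝔪| + |I_s| = |𝔫|. Let A_{Γs} be the submatrix of A with rows 𝔫 and columns 𝔪 ∪ I_s, and A_{Γ̄s} the complementary submatrix. Then the Jacobian J = ν ⬝ R is singular if and only if A_{Γs} is singular or A_{Γ̄s} is singular; that is, det(ν ⬝ R) = 0 ⟺ det(A_{Γs}) = 0 ∨ det(A_{Γ̄s}) = 0. -/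

import Mathlib

open Matrix

/-- The submatrix of the augmented matrix `[R | C]` with rows restricted to the reactions
satisfying `Pn` and columns restricted to the chemicals satisfying `Pm` together with the
kernel columns satisfying `Pk`. -/
def subBlock {M N K : ℕ} (R : Matrix (Fin N) (Fin M) ℝ) (C : Matrix (Fin N) (Fin K) ℝ)
    (Pn : Fin N → Prop) (Pm : Fin M → Prop) (Pk : Fin K → Prop) :
    Matrix {n // Pn n} ({m // Pm m} ⊕ {α // Pk α}) ℝ :=
  Matrix.fromCols (R.submatrix (fun i => i.1) (fun j => j.1))
    (C.submatrix (fun i => i.1) (fun j => j.1))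

section Aux
open Sum Equiv
variable {α β γ δ : Type*}

@[simp] lemma ssc_inl_inl (a : α) :
    sumSumSumComm α β γ δ (inl (inl a)) = inl (inl a) := rfl
@[simp] lemma ssc_inl_inr (b : β) :
    sumSumSumComm α β γ δ (inl (inr b)) = inr (inl b) := rfl
@[simp] lemma ssc_inr_inl (c : γ) :
    sumSumSumComm α β γ δ (inr (inl c)) = inl (inr c) := rfl
@[simp] lemma ssc_inr_inr (d : δ) :
    sumSumSumComm α β γ δ (inr (inr d)) = inr (inr d) := rfl
end Aux

/-- structural bifurcation criterion for a buffering structure `(𝔪, 𝔫)` with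
supported kernel columns `Is`: the Jacobian `J = ν * R` is singular iff `A_Γs` or `A_Γ̄s`
is singular. -/
theorem statement8 {M N K : ℕ} (hK : M + K = N)
    (ν : Matrix (Fin M) (Fin N) ℝ) (hrank : ν.rank = M)
    (R : Matrix (Fin N) (Fin M) ℝ) (C : Matrix (Fin N) (Fin K) ℝ)
    (hC : ∃ b : Module.Basis (Fin K) ℝ (LinearMap.ker ν.mulVecLin),
        ∀ k n, (b k).1 n = C n k)
    (𝔪 : Finset (Fin M)) (𝔫 : Finset (Fin N)) (Is : Finset (Fin K))
    (h1 : ∀ m ∈ 𝔪, ∀ n ∉ 𝔫, R n m = 0)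
    (h2 : ∀ α ∈ Is, ∀ n ∉ 𝔫, C n α = 0)
    (h3 : 𝔪.card + Is.card = 𝔫.card)
    (e : {n // n ∈ 𝔫} ≃ ({m // m ∈ 𝔪} ⊕ {α // α ∈ Is}))
    (e' : {n // n ∉ 𝔫} ≃ ({m // m ∉ 𝔪} ⊕ {α // α ∉ Is})) :
    (ν * R).det = 0 ↔
      ((subBlock R C (· ∈ 𝔫) (· ∈ 𝔪) (· ∈ Is)).submatrix id e).det = 0 ∨
      ((subBlock R C (· ∉ 𝔫) (· ∉ 𝔪) (· ∉ Is)).submatrix id e').det = 0 := by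
  classical
  obtain ⟨b, hb⟩ := hC
  set A : Matrix (Fin N) (Fin M ⊕ Fin K) ℝ := fromCols R C with hA
  set D : Matrix (Fin M ⊕ Fin K) (Fin N) ℝ := fromRows ν Cᵀ with hD
  -- ν * C = 0
  have hker : ∀ k, ν *ᵥ (fun n => C n k) = 0 := by
    intro k
    have h := LinearMap.mem_ker.mp (b k).2
    rw [mulVecLin_apply] at h
    have : (fun n => C n k) = (b k).1 := by funext n; exact (hb k n).symm
    rw [this]; exact h
  have hνC : ν * C = 0 := by
    ext m k
    have : (ν * C) m k = (ν *ᵥ (fun n => C n k)) m := rfl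
    rw [this, hker k]; rfl
  -- Gram matrix is nonsingular
  have hCmv : ∀ x : Fin K → ℝ, C *ᵥ x = 0 → x = 0 := by
    intro x hx
    have hsum : (∑ k, x k • b k) = 0 := by
      apply Subtype.ext
      have hcoe : ((∑ k, x k • b k : LinearMap.ker ν.mulVecLin) : Fin N → ℝ)
          = ∑ k, x k • ((b k : Fin N → ℝ)) := by
        simp
      rw [hcoe]
      funext n
      have := congrFun hx n
      simp only [mulVec, dotProduct] at this
      simpa [hb, mul_comm] using this
    have hli := Fintype.linearIndependent_iff.mp b.linearIndependent x hsum
    funext k; exact hli k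
  have hGram0 : ∀ x : Fin K → ℝ, (Cᵀ * C) *ᵥ x = 0 → x = 0 := by
    intro x hx
    apply hCmv
    have h0 : (C *ᵥ x) ⬝ᵥ (C *ᵥ x) = 0 := by
      have : x ⬝ᵥ ((Cᵀ * C) *ᵥ x) = 0 := by rw [hx]; simp
      rwa [← mulVec_mulVec, dotProduct_mulVec, vecMul_transpose] at this
    exact dotProduct_self_eq_zero.mp h0
  have hGram : (Cᵀ * C).det ≠ 0 := by
    have hinj : Function.Injective ((Cᵀ * C).mulVec) := by
      intro x y hxy
      have := hGram0 (x - y) (by rw [mulVec_sub, hxy, sub_self])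
      exact sub_eq_zero.mp this
    exact ((Matrix.isUnit_iff_isUnit_det _).mp (mulVec_injective_iff_isUnit.mp hinj)).ne_zero
  -- D has trivial kernel
  have hDker : ∀ y : Fin N → ℝ, D *ᵥ y = 0 → y = 0 := by
    intro y hy
    rw [hD, fromRows_mulVec] at hy
    have hν : ν *ᵥ y = 0 := by
      funext m; exact congrFun hy (Sum.inl m)
    have hCt : Cᵀ *ᵥ y = 0 := by
      funext k; exact congrFun hy (Sum.inr k)
    have hymem : y ∈ LinearMap.ker ν.mulVecLin := by
      rw [LinearMap.mem_ker, mulVecLin_apply]; exact hν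
    set yy : LinearMap.ker ν.mulVecLin := ⟨y, hymem⟩ with hyy
    have hrep : y = ∑ k, b.repr yy k • ((b k : Fin N → ℝ)) := by
      have := b.sum_repr yy
      have hcoe := congrArg (Subtype.val) this
      rw [Submodule.coe_sum] at hcoe
      simp only [Submodule.coe_smul] at hcoe
      exact hcoe.symm
    have hterm : ∀ k, ((b k : Fin N → ℝ)) ⬝ᵥ y = 0 := by
      intro k
      have := congrFun hCt k
      simp only [mulVec, dotProduct, transpose_apply] at this
      simpa [dotProduct, hb] using this
    have h0 : y ⬝ᵥ y = 0 := by
      calc y ⬝ᵥ y = (∑ k, b.repr yy k • ((b k : Fin N → ℝ))) ⬝ᵥ y := by rw [← hrep]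
        _ = ∑ k, b.repr yy k * (((b k : Fin N → ℝ)) ⬝ᵥ y) := by
            simp only [dotProduct, Finset.sum_apply, Pi.smul_apply, smul_eq_mul, Finset.sum_mul,
              Finset.mul_sum, mul_assoc]
            exact Finset.sum_comm
        _ = 0 := by simp [hterm]
    funext n
    exact congrFun (dotProduct_self_eq_zero.mp h0) n
  -- the reindexing equivalences
  set rowEquiv : (({m // m ∈ 𝔪} ⊕ {α // α ∈ Is}) ⊕ ({m // m ∉ 𝔪} ⊕ {α // α ∉ Is})) ≃ Fin N :=
    (Equiv.sumCongr e.symm e'.symm).trans (Equiv.sumCompl (· ∈ 𝔫)) with hrow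
  set colEquiv : (({m // m ∈ 𝔪} ⊕ {α // α ∈ Is}) ⊕ ({m // m ∉ 𝔪} ⊕ {α // α ∉ Is})) ≃ (Fin M ⊕ Fin K) :=
    (Equiv.sumSumSumComm {m // m ∈ 𝔪} {α // α ∈ Is} {m // m ∉ 𝔪} {α // α ∉ Is}).trans
      (Equiv.sumCongr (Equiv.sumCompl (· ∈ 𝔪)) (Equiv.sumCompl (· ∈ Is))) with hcol
  set Aq := A.submatrix rowEquiv colEquiv with hAq
  set Dq := D.submatrix colEquiv rowEquiv with hDq
  -- determinant of Dq is nonzero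
  have hDqdet : Dq.det ≠ 0 := by
    have hinj : Function.Injective (Dq.mulVec) := by
      intro x y hxy
      have hx0 : Dq *ᵥ (x - y) = 0 := by rw [mulVec_sub, hxy, sub_self]
      rw [hDq, submatrix_mulVec_equiv] at hx0
      have hD0 : D *ᵥ ((x - y) ∘ rowEquiv.symm) = 0 := by
        funext i
        have := congrFun hx0 (colEquiv.symm i)
        simpa using this
      have := hDker _ hD0
      have hxy0 : x - y = 0 := by
        funext j
        have h := congrFun this (rowEquiv j)
        simpa using h
      exact sub_eq_zero.mp hxy0
    exact ((Matrix.isUnit_iff_isUnit_det _).mp (mulVec_injective_iff_isUnit.mp hinj)).ne_zero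
  -- D * A computation
  have hDA : D * A = fromBlocks (ν * R) 0 (Cᵀ * R) (Cᵀ * C) := by
    rw [hD, hA, fromRows_mul_fromCols, hνC]
  -- key determinant identity
  have hkey : Dq.det * Aq.det = (ν * R).det * (Cᵀ * C).det := by
    have hmul : Dq * Aq = (D * A).submatrix colEquiv colEquiv :=
      submatrix_mul_equiv D A colEquiv rowEquiv colEquiv
    calc Dq.det * Aq.det = (Dq * Aq).det := (det_mul _ _).symm
      _ = ((D * A).submatrix colEquiv colEquiv).det := by rw [hmul]
      _ = (D * A).det := det_submatrix_equiv_self _ _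
      _ = (ν * R).det * (Cᵀ * C).det := by rw [hDA, det_fromBlocks_zero₁₂]
  -- block structure of Aq
  set M₁ := (subBlock R C (· ∈ 𝔫) (· ∈ 𝔪) (· ∈ Is)).submatrix id e with hM₁
  set M₂ := (subBlock R C (· ∉ 𝔫) (· ∉ 𝔪) (· ∉ Is)).submatrix id e' with hM₂
  have hblock : Aq = fromBlocks (M₁.submatrix e.symm e.symm) (Aq.toBlocks₁₂) 0
      (M₂.submatrix e'.symm e'.symm) := by
    ext i j
    cases i with
    | inl s =>
      cases j with
      | inl t =>
        cases t with
        | inl m =>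
          simp [hAq, hA, hrow, hcol, hM₁, subBlock, ]
        | inr α =>
          simp [hAq, hA, hrow, hcol, hM₁, subBlock, ]
      | inr t =>
        simp [toBlocks₁₂]
    | inr s =>
      cases j with
      | inl t =>
        have hs : (e'.symm s : Fin N) ∉ 𝔫 := (e'.symm s).2
        cases t with
        | inl m =>
          simp [hAq, hA, hrow, hcol, Equiv.sumSumSumComm, h1 m.1 m.2 _ hs]
        | inr α =>
          simp [hAq, hA, hrow, hcol, Equiv.sumSumSumComm, h2 α.1 α.2 _ hs]
      | inr t =>
        cases t with
        | inl m =>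
          simp [hAq, hA, hrow, hcol, hM₂, subBlock, ]
        | inr α =>
          simp [hAq, hA, hrow, hcol, hM₂, subBlock, ]
  have hAqdet : Aq.det = M₁.det * M₂.det := by
    rw [hblock, det_fromBlocks_zero₂₁, det_submatrix_equiv_self, det_submatrix_equiv_self]
  rw [hAqdet] at hkey
  constructor
  · intro h0
    rw [h0, zero_mul] at hkey
    rcases mul_eq_zero.mp hkey with h | h
    · exact absurd h hDqdet
    · exact mul_eq_zero.mp h
  · intro h0
    have : M₁.det * M₂.det = 0 := by
      rcases h0 with h | h
      · rw [h, zero_mul]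
      · rw [h, mul_zero]
    rw [this, mul_zero] at hkey
    rcases mul_eq_zero.mp hkey.symm with h | h
    · exact h
    · exact absurd h hGram
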